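/- Let n ≥ 1 and suppose M_k is invertible for every k ∈ ℤ. With c_k^T := e_n^T M_k^{-1} and Θ_k the matrix whose i-th row is c_{k+i}^T A_{k+i-1} ⋯ A_k, the transformed dynamics matrix Ā_k := Θ_{k+1} A_k Θ_k^{-1} is in companion (controller canonical) form in its first n−1 rows: for every i = 0, …, n−2, the i-th row of Ā_k equals the (i+1)-th standard basis row vector e_{i+1}^T. -/

import Mathlib

open Matrix BigOperators

noncomputable section

/-- `Pmat n A k j = A (k-1) * A (k-2) * ⋯ * A (k-j)` (product of `j` factors, `Pmat n A k 0 = 1`). -/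
def Pmat (n : ℕ) (A : ℤ → Matrix (Fin n) (Fin n) ℝ) (k : ℤ) : ℕ → Matrix (Fin n) (Fin n) ℝ
  | 0 => 1
  | j + 1 => Pmat n A k j * A (k - ((j : ℤ) + 1))

/-- The matrix `M_k` whose `j`-th column is `P_k^{(j)} b_{k-1-j}`. -/
def Mmat (n : ℕ) (A : ℤ → Matrix (Fin n) (Fin n) ℝ) (b : ℤ → Fin n → ℝ) (k : ℤ) :
    Matrix (Fin n) (Fin n) ℝ :=
  Matrix.of fun i j => (Pmat n A k (j : ℕ) *ᵥ b (k - 1 - ((j : ℕ) : ℤ))) i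

/-- The last standard basis vector `e_n` of `ℝ^n`. -/
def elast (n : ℕ) : Fin n → ℝ := fun i => if (i : ℕ) = n - 1 then 1 else 0

/-- The row vector `c_k^T := e_n^T M_k^{-1}`. -/
def cvec (n : ℕ) (A : ℤ → Matrix (Fin n) (Fin n) ℝ) (b : ℤ → Fin n → ℝ) (k : ℤ) :
    Fin n → ℝ :=
  elast n ᵥ* (Mmat n A b k)⁻¹

/-- The matrix `Θ_k` whose `i`-th row is `c_{k+i}^T A_{k+i-1} ⋯ A_k`. -/
def Theta (n : ℕ) (A : ℤ → Matrix (Fin n) (Fin n) ℝ) (b : ℤ → Fin n → ℝ) (k : ℤ) :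
    Matrix (Fin n) (Fin n) ℝ :=
  Matrix.of fun i j => (cvec n A b (k + (i : ℕ)) ᵥ* Pmat n A (k + (i : ℕ)) (i : ℕ)) j

/-- The transformed dynamics matrix `Ā_k := Θ_{k+1} A_k Θ_k^{-1}`. -/
def Abar (n : ℕ) (A : ℤ → Matrix (Fin n) (Fin n) ℝ) (b : ℤ → Fin n → ℝ) (k : ℤ) :
    Matrix (Fin n) (Fin n) ℝ :=
  Theta n A b (k + 1) * A k * (Theta n A b k)⁻¹

lemma Pmat_succ (n : ℕ) (A : ℤ → Matrix (Fin n) (Fin n) ℝ) (k : ℤ) (j : ℕ) :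
    Pmat n A k (j + 1) = Pmat n A k j * A (k - ((j : ℤ) + 1)) := rfl

lemma Pmat_mul (n : ℕ) (A : ℤ → Matrix (Fin n) (Fin n) ℝ) (k : ℤ) (i j : ℕ) :
    Pmat n A (k + (i : ℤ)) i * Pmat n A k j = Pmat n A (k + (i : ℤ)) (i + j) := by
  induction j with
  | zero => simp [Pmat]
  | succ j ih =>
    rw [Pmat_succ, ← mul_assoc, ih, show i + (j + 1) = (i + j) + 1 from rfl, Pmat_succ]
    congr 2
    push_cast
    ring

/-- Entry formula for `Θ_k M_k` in the anti-triangular region. -/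
lemma ThetaM_apply (n : ℕ) (A : ℤ → Matrix (Fin n) (Fin n) ℝ) (b : ℤ → Fin n → ℝ)
    (hM : ∀ k : ℤ, IsUnit (Mmat n A b k)) (k : ℤ) (i j : Fin n)
    (h : (i : ℕ) + (j : ℕ) < n) :
    (Theta n A b k * Mmat n A b k) i j
      = if (i : ℕ) + (j : ℕ) = n - 1 then 1 else 0 := by
  have hdet : IsUnit (Mmat n A b (k + (i : ℕ))).det :=
    (Matrix.isUnit_iff_isUnit_det _).mp (hM _)
  have h1 : (Theta n A b k * Mmat n A b k) i j
      = (cvec n A b (k + (i : ℕ)) ᵥ* Pmat n A (k + (i : ℕ)) (i : ℕ))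
          ⬝ᵥ (Pmat n A k (j : ℕ) *ᵥ b (k - 1 - ((j : ℕ) : ℤ))) := by
    simp [Matrix.mul_apply, Theta, Mmat, dotProduct]
  rw [h1, ← Matrix.dotProduct_mulVec, Matrix.mulVec_mulVec, Pmat_mul]
  set m : Fin n := ⟨(i : ℕ) + (j : ℕ), h⟩ with hm
  have h2 : (Pmat n A (k + (i : ℕ)) ((i : ℕ) + (j : ℕ)) *ᵥ b (k - 1 - ((j : ℕ) : ℤ)))
      = fun l => Mmat n A b (k + (i : ℕ)) l m := by
    funext l
    simp only [Mmat, Matrix.of_apply, hm]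
    congr 2
    push_cast
    ring
  rw [h2]
  have h3 : (cvec n A b (k + (i : ℕ)) ⬝ᵥ fun l => Mmat n A b (k + (i : ℕ)) l m)
      = (cvec n A b (k + (i : ℕ)) ᵥ* Mmat n A b (k + (i : ℕ))) m := rfl
  rw [h3, cvec, Matrix.vecMul_vecMul, Matrix.nonsing_inv_mul _ hdet, Matrix.vecMul_one]
  simp [elast, hm]

lemma isUnit_ThetaM (n : ℕ) (A : ℤ → Matrix (Fin n) (Fin n) ℝ) (b : ℤ → Fin n → ℝ)
    (hM : ∀ k : ℤ, IsUnit (Mmat n A b k)) (k : ℤ) :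
    IsUnit (Theta n A b k * Mmat n A b k) := by
  set N := Theta n A b k * Mmat n A b k with hN
  rw [Matrix.isUnit_iff_isUnit_det]
  have hrev : ∀ i : Fin n, ((Fin.revPerm i : Fin n) : ℕ) = n - 1 - (i : ℕ) := by
    intro i
    simp [Fin.rev]
    omega
  have htri : (N.submatrix Fin.revPerm id).BlockTriangular id := by
    intro i j hij
    have hi := i.isLt
    have hj := j.isLt
    have hij' : (j : ℕ) < (i : ℕ) := hij
    simp only [Matrix.submatrix_apply, id_eq]
    rw [hN, ThetaM_apply n A b hM k (Fin.revPerm i) j (by rw [hrev]; omega), hrev,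
      if_neg (by omega)]
  have hdiag : ∀ i : Fin n, (N.submatrix Fin.revPerm id) i i = 1 := by
    intro i
    have hi := i.isLt
    simp only [Matrix.submatrix_apply, id_eq]
    rw [hN, ThetaM_apply n A b hM k (Fin.revPerm i) i (by rw [hrev]; omega), hrev,
      if_pos (by omega)]
  have hdet1 : (N.submatrix Fin.revPerm id).det = 1 := by
    rw [Matrix.det_of_upperTriangular htri]
    exact Finset.prod_eq_one (fun i _ => hdiag i)
  have := Matrix.det_permute (Fin.revPerm) N
  rw [hdet1] at this
  exact IsUnit.of_mul_eq_one _ (by rw [mul_comm, this])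

lemma isUnit_Theta (n : ℕ) (A : ℤ → Matrix (Fin n) (Fin n) ℝ) (b : ℤ → Fin n → ℝ)
    (hM : ∀ k : ℤ, IsUnit (Mmat n A b k)) (k : ℤ) :
    IsUnit (Theta n A b k) := by
  have h := isUnit_ThetaM n A b hM k
  rw [Matrix.isUnit_iff_isUnit_det] at h ⊢
  rw [Matrix.det_mul] at h
  exact isUnit_of_mul_isUnit_left h

/-- the transformed dynamics matrix `Ā_k := Θ_{k+1} A_k Θ_k⁻¹` is in
companion (controller canonical) form in its first `n-1` rows: for every `i = 0, …, n-2`,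
the `i`-th row of `Ā_k` equals the `(i+1)`-th standard basis row vector. -/
theorem stmt3 (n : ℕ) (hn : 1 ≤ n)
    (A : ℤ → Matrix (Fin n) (Fin n) ℝ) (b : ℤ → Fin n → ℝ)
    (hM : ∀ k : ℤ, IsUnit (Mmat n A b k)) :
    ∀ k : ℤ, ∀ i j : Fin n, (i : ℕ) + 2 ≤ n →
      Abar n A b k i j = if (j : ℕ) = (i : ℕ) + 1 then 1 else 0 := by
  intro k i j hij
  have hT : IsUnit (Theta n A b k).det :=
    (Matrix.isUnit_iff_isUnit_det _).mp (isUnit_Theta n A b hM k)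
  set i' : Fin n := ⟨(i : ℕ) + 1, by omega⟩ with hi'
  have hrow : ∀ l : Fin n, (Theta n A b (k + 1) * A k) i l = Theta n A b k i' l := by
    intro l
    have h1 : (Theta n A b (k + 1) * A k) i l
        = ((cvec n A b (k + 1 + (i : ℕ)) ᵥ* Pmat n A (k + 1 + (i : ℕ)) (i : ℕ)) ᵥ* A k) l := by
      simp [Matrix.mul_apply, Theta, Matrix.vecMul, dotProduct]
    rw [h1, Matrix.vecMul_vecMul]
    have h2 : Pmat n A (k + 1 + (i : ℕ)) (i : ℕ) * A k
        = Pmat n A (k + 1 + (i : ℕ)) ((i : ℕ) + 1) := by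
      rw [Pmat_succ]
      congr 2
      push_cast
      ring
    rw [h2]
    have h3 : k + 1 + ((i : ℕ) : ℤ) = k + ((((i : ℕ) + 1 : ℕ)) : ℤ) := by
      push_cast
      ring
    simp only [Theta, Matrix.of_apply, hi']
    rw [h3]
  have h4 : Abar n A b k i j = ∑ l, (Theta n A b (k + 1) * A k) i l * (Theta n A b k)⁻¹ l j := by
    simp [Abar, Matrix.mul_apply]
  rw [h4]
  simp_rw [hrow]
  have h5 : ∑ l, Theta n A b k i' l * (Theta n A b k)⁻¹ l j
      = (Theta n A b k * (Theta n A b k)⁻¹) i' j := (Matrix.mul_apply).symm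
  rw [h5, Matrix.mul_nonsing_inv _ hT, Matrix.one_apply]
  by_cases hc : (j : ℕ) = (i : ℕ) + 1
  · rw [if_pos (Fin.ext hc.symm), if_pos hc]
  · rw [if_neg (fun he => hc (by rw [← he])), if_neg hc]
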